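/- arXiv:1503.08528 — 8 statements merged into one kernel-verified Lean document; each statement's English description precedes it below -/
import Mathlib

section
/- Let u, z ∈ V and let q ∈ [0,1) be such that at least (1−q)·n of the points v ∈ V satisfy dist(z,v) ≥ dist(z,u) (i.e., u is the (qn)-th closest point of V to z). Assume W(u) > 0 and W(z) > 0. Then for every v ∈ V: max{1/n, dist(u,v)/W(u)} ≥ ((1−q)/4)·dist(z,v)/W(z). -/
open Finset

/-- If `u` is the `(qn)`-th closest point of `V` to `z` (i.e. at least
`(1-q)·n` points `v ∈ V` satisfy `dist z v ≥ dist z u`), then for every `v ∈ V`,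
`max{1/n, dist(u,v)/W(u)} ≥ ((1-q)/4)·dist(z,v)/W(z)`. -/
theorem stmt0 {X : Type*} [MetricSpace X] (V : Finset X) (u z : X)
    (hu : u ∈ V) (hz : z ∈ V) (q : ℝ) (hq0 : 0 ≤ q) (hq1 : q < 1)
    (hrank : (1 - q) * (V.card : ℝ) ≤
      ((V.filter fun v => dist z u ≤ dist z v).card : ℝ))
    (hWu : 0 < ∑ w ∈ V, dist u w) (hWz : 0 < ∑ w ∈ V, dist z w) :
    ∀ v ∈ V,
      (1 - q) / 4 * (dist z v / ∑ w ∈ V, dist z w) ≤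
        max (1 / (V.card : ℝ)) (dist u v / ∑ w ∈ V, dist u w) := by
  intro v hv
  set Wz := ∑ w ∈ V, dist z w with hWzdef
  set Wu := ∑ w ∈ V, dist u w with hWudef
  have hn : (0:ℝ) < (V.card : ℝ) := by
    exact_mod_cast Finset.card_pos.mpr ⟨u, hu⟩
  have hd0 : (0:ℝ) ≤ dist z u := dist_nonneg
  have hq' : (0:ℝ) ≤ 1 - q := by linarith
  have hkey : (1 - q) * (V.card : ℝ) * dist z u ≤ Wz := by
    calc (1 - q) * (V.card : ℝ) * dist z u
        ≤ ((V.filter fun v => dist z u ≤ dist z v).card : ℝ) * dist z u :=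
          mul_le_mul_of_nonneg_right hrank hd0
      _ ≤ ∑ w ∈ V.filter (fun v => dist z u ≤ dist z v), dist z w := by
          have := Finset.card_nsmul_le_sum (V.filter fun v => dist z u ≤ dist z v)
            (fun w => dist z w) (dist z u) (fun x hx => (Finset.mem_filter.mp hx).2)
          simpa [nsmul_eq_mul] using this
      _ ≤ Wz := Finset.sum_le_sum_of_subset_of_nonneg (Finset.filter_subset _ _)
          (fun i _ _ => dist_nonneg)
  have hdv0 : (0:ℝ) ≤ dist z v := dist_nonneg
  by_cases h : dist z v ≤ 2 * dist z u
  · refine le_trans ?_ (le_max_left _ _)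
    have heq : (1 - q) / 4 * (dist z v / Wz) = ((1 - q) * dist z v) / (4 * Wz) := by
      ring
    rw [heq, div_le_div_iff₀ (by positivity) hn]
    have h1 : (1 - q) * (V.card : ℝ) * dist z v ≤ 2 * Wz := by
      nlinarith [mul_le_mul_of_nonneg_left h (mul_nonneg hq' hn.le)]
    nlinarith
  · push_neg at h
    refine le_trans ?_ (le_max_right _ _)
    have hWu_le : Wu ≤ Wz + (V.card : ℝ) * dist z u := by
      have : Wu ≤ ∑ w ∈ V, (dist z w + dist z u) := by
        apply Finset.sum_le_sum
        intro i hi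
        calc dist u i ≤ dist u z + dist z i := dist_triangle _ _ _
          _ = dist z i + dist z u := by rw [dist_comm u z]; ring
      simpa [Finset.sum_add_distrib, mul_comm] using this
    have hWu2 : (1 - q) * Wu ≤ 2 * Wz := by nlinarith
    have huv : dist z v ≤ 2 * dist u v := by
      have ht : dist z v ≤ dist z u + dist u v := dist_triangle _ _ _
      linarith
    have heq : (1 - q) / 4 * (dist z v / Wz) = ((1 - q) * dist z v) / (4 * Wz) := by
      ring
    rw [heq, div_le_div_iff₀ (by positivity) hWu]
    nlinarith [mul_le_mul_of_nonneg_left hWu2 hdv0,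
      mul_le_mul_of_nonneg_left huv hWz.le]
end

section
/- Let z ∈ V with W(z) > 0, let c > 0 and k > 0, and let γ : V → ℝ satisfy γ_v ≥ c·dist(z,v)/W(z) for every v ∈ V. For each v set p_v = min{1, k·γ_v}. Then Σ over v ∈ V with dist(z,v) > 0 of (1/p_v − 1)·dist(z,v)² is at most W(z)²/(k·c). (Note that p_v > 0 whenever dist(z,v) > 0.) -/
open Finset

/-- If `γ_v ≥ c·dist(z,v)/W(z)` for every `v ∈ V` and `p_v = min{1, k·γ_v}`,
then `Σ_{v ∈ V, dist(z,v) > 0} (1/p_v − 1)·dist(z,v)² ≤ W(z)²/(k·c)`. -/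
theorem stmt1 {X : Type*} [MetricSpace X] (V : Finset X) (z : X) (hz : z ∈ V)
    (hWz : 0 < ∑ w ∈ V, dist z w) (c k : ℝ) (hc : 0 < c) (hk : 0 < k)
    (γ : X → ℝ) (hγ : ∀ v ∈ V, c * (dist z v / ∑ w ∈ V, dist z w) ≤ γ v) :
    ∑ v ∈ V.filter (fun v => 0 < dist z v),
        (1 / min 1 (k * γ v) - 1) * dist z v ^ 2 ≤
      (∑ w ∈ V, dist z w) ^ 2 / (k * c) := by
  set W := ∑ w ∈ V, dist z w with hW
  have key : ∀ v ∈ V.filter (fun v => 0 < dist z v),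
      (1 / min 1 (k * γ v) - 1) * dist z v ^ 2 ≤ W / (k * c) * dist z v := by
    intro v hv
    rw [mem_filter] at hv
    obtain ⟨hvV, hd⟩ := hv
    have hγv : c * (dist z v / W) ≤ γ v := hγ v hvV
    have hγpos : 0 < γ v := lt_of_lt_of_le (by positivity) hγv
    have h1 : 1 / min 1 (k * γ v) - 1 ≤ 1 / (k * γ v) := by
      rcases le_total 1 (k * γ v) with h | h
      · rw [min_eq_left h]
        have : 0 < 1 / (k * γ v) := by positivity
        linarith
      · rw [min_eq_right h]
        linarith
    have h2 : 1 / (k * γ v) ≤ W / (k * c * dist z v) := by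
      rw [div_le_div_iff₀ (by positivity) (by positivity)]
      have h3 : c * dist z v ≤ γ v * W := by
        have := mul_le_mul_of_nonneg_right hγv (le_of_lt hWz)
        rw [mul_assoc, div_mul_cancel₀ _ (ne_of_gt hWz)] at this
        linarith
      nlinarith
    calc (1 / min 1 (k * γ v) - 1) * dist z v ^ 2
        ≤ W / (k * c * dist z v) * dist z v ^ 2 :=
          mul_le_mul_of_nonneg_right (h1.trans h2) (by positivity)
      _ = W / (k * c) * dist z v := by
          field_simp
  calc ∑ v ∈ V.filter (fun v => 0 < dist z v), (1 / min 1 (k * γ v) - 1) * dist z v ^ 2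
      ≤ ∑ v ∈ V.filter (fun v => 0 < dist z v), W / (k * c) * dist z v := sum_le_sum key
    _ = W / (k * c) * ∑ v ∈ V.filter (fun v => 0 < dist z v), dist z v := by rw [mul_sum]
    _ ≤ W / (k * c) * W := by
        apply mul_le_mul_of_nonneg_left _ (by positivity)
        exact sum_le_sum_of_subset_of_nonneg (filter_subset _ _)
          (fun i hi _ => dist_nonneg)
    _ = W ^ 2 / (k * c) := by ring
end

section
/- Let v ∈ V satisfy m(v) = MinMed. Then every point u ∈ V with dist(u,v) ≤ m(v) (in particular, each of the ⌈1+n/2⌉ points of V closest to v) satisfies m(u) ≤ 2·MinMed, i.e., is well positioned. Consequently at least ⌈1+n/2⌉ points of V are well positioned. -/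
open Finset

/-- The `Q`-quantile distance of `u` to the finite point set `V`: the smallest radius `r`
such that the closed ball of radius `r` around `u` contains at least `Q` points of `V`. -/
noncomputable def medDist {X : Type*} [MetricSpace X] (V : Finset X) (Q : ℕ) (u : X) : ℝ :=
  sInf {r : ℝ | Q ≤ (V.filter fun v => dist u v ≤ r).card}

/-- The median distance `m(u)`: the `⌈1+n/2⌉`-th smallest distance from `u` to `V`
(where `⌈1+n/2⌉ = (n+1)/2 + 1` using integer division). -/
noncomputable def med {X : Type*} [MetricSpace X] (V : Finset X) (u : X) : ℝ :=
  medDist V ((V.card + 1) / 2 + 1) u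

section Aux

variable {X : Type*} [MetricSpace X] (V : Finset X) (Q : ℕ) (u : X)

lemma medSet_bddBelow (hQ1 : 1 ≤ Q) :
    BddBelow {r : ℝ | Q ≤ (V.filter fun v => dist u v ≤ r).card} := by
  refine ⟨0, fun r hr => ?_⟩
  simp only [Set.mem_setOf_eq] at hr
  have hne : (V.filter fun v => dist u v ≤ r).Nonempty := by
    rw [← Finset.card_pos]; omega
  obtain ⟨w, hw⟩ := hne
  have := (Finset.mem_filter.mp hw).2
  exact le_trans dist_nonneg this

lemma medSet_key (hQ1 : 1 ≤ Q) {r : ℝ}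
    (hr : Q ≤ (V.filter fun v => dist u v ≤ r).card) :
    ∃ d ∈ V.image (dist u), d ≤ r ∧ Q ≤ (V.filter fun v => dist u v ≤ d).card := by
  set F := V.filter fun v => dist u v ≤ r with hF
  have hFne : F.Nonempty := by rw [← Finset.card_pos]; omega
  have hIne : (F.image (dist u)).Nonempty := hFne.image _
  refine ⟨(F.image (dist u)).max' hIne, ?_, ?_, ?_⟩
  · exact Finset.image_subset_image (Finset.filter_subset _ _) ((F.image (dist u)).max'_mem hIne)
  · obtain ⟨w, hwF, hwd⟩ := Finset.mem_image.mp ((F.image (dist u)).max'_mem hIne)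
    rw [← hwd]
    exact (Finset.mem_filter.mp hwF).2
  · refine le_trans hr (Finset.card_le_card ?_)
    intro w hw
    rw [Finset.mem_filter]
    refine ⟨(Finset.mem_filter.mp hw).1, ?_⟩
    exact Finset.le_max' _ _ (Finset.mem_image_of_mem _ hw)

lemma medDist_mem (hQ1 : 1 ≤ Q) (hQ : Q ≤ V.card) :
    Q ≤ (V.filter fun v => dist u v ≤ medDist V Q u).card := by
  classical
  set S := {r : ℝ | Q ≤ (V.filter fun v => dist u v ≤ r).card} with hS
  have hVne : V.Nonempty := by rw [← Finset.card_pos]; omega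
  have hIne : (V.image (dist u)).Nonempty := hVne.image _
  have hrmax : (V.image (dist u)).max' hIne ∈ S := by
    simp only [hS, Set.mem_setOf_eq]
    refine le_trans hQ (le_of_eq ?_)
    congr 1
    refine (Finset.filter_true_of_mem fun w hw => ?_).symm
    exact Finset.le_max' _ _ (Finset.mem_image_of_mem _ hw)
  set T := (V.image (dist u)).filter (· ∈ S) with hT
  have hTne : T.Nonempty := by
    obtain ⟨d, hd, _, hdS⟩ := medSet_key V Q u hQ1 hrmax
    exact ⟨d, Finset.mem_filter.mpr ⟨hd, hdS⟩⟩
  have hm : T.min' hTne ∈ S := (Finset.mem_filter.mp (T.min'_mem hTne)).2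
  have : medDist V Q u = T.min' hTne := by
    apply le_antisymm
    · exact csInf_le (medSet_bddBelow V Q u hQ1) hm
    · apply le_csInf ⟨_, hrmax⟩
      intro r hr
      obtain ⟨d, hd, hdr, hdS⟩ := medSet_key V Q u hQ1 hr
      exact le_trans (Finset.min'_le _ _ (Finset.mem_filter.mpr ⟨hd, hdS⟩)) hdr
  rw [this]
  exact hm

lemma medDist_le (hQ1 : 1 ≤ Q) {r : ℝ}
    (hr : Q ≤ (V.filter fun v => dist u v ≤ r).card) :
    medDist V Q u ≤ r :=
  csInf_le (medSet_bddBelow V Q u hQ1) hr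

end Aux

/-- If `v ∈ V` attains the minimum median distance `MinMed`, then every
`u ∈ V` with `dist u v ≤ m(v)` satisfies `m(u) ≤ 2·MinMed`, i.e. is well positioned;
consequently at least `⌈1+n/2⌉` points of `V` are well positioned. -/
theorem stmt3 {X : Type*} [MetricSpace X] (V : Finset X)
    (hQ : (V.card + 1) / 2 + 1 ≤ V.card)
    (v : X) (hv : v ∈ V) (hmin : ∀ w ∈ V, med V v ≤ med V w) :
    (∀ u ∈ V, dist u v ≤ med V v → med V u ≤ 2 * med V v) ∧
      (V.card + 1) / 2 + 1 ≤ (V.filter fun u => med V u ≤ 2 * med V v).card := by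
  set Q := (V.card + 1) / 2 + 1 with hQdef
  have hQ1 : 1 ≤ Q := by omega
  have hball : Q ≤ (V.filter fun w => dist v w ≤ med V v).card :=
    medDist_mem V Q v hQ1 hQ
  have main : ∀ u ∈ V, dist u v ≤ med V v → med V u ≤ 2 * med V v := by
    intro u hu huv
    apply medDist_le V Q u hQ1
    refine le_trans hball (Finset.card_le_card ?_)
    intro w hw
    rw [Finset.mem_filter] at hw ⊢
    refine ⟨hw.1, ?_⟩
    calc dist u w ≤ dist u v + dist v w := dist_triangle u v w
      _ ≤ med V v + med V v := add_le_add huv hw.2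
      _ = 2 * med V v := by ring
  refine ⟨main, ?_⟩
  refine le_trans hball (Finset.card_le_card ?_)
  intro w hw
  rw [Finset.mem_filter] at hw ⊢
  exact ⟨hw.1, main w hw.1 (by rw [dist_comm]; exact hw.2)⟩
end

section
/- Assume n ≥ 9. Then Σ_{v ∈ V} max_{z ∈ V} dist(z,v)/W(z) ≤ 36. -/
open Finset

/-- If `n ≥ 9`, then `Σ_{v ∈ V} max_{z ∈ V} dist(z,v)/W(z) ≤ 36`. -/
theorem stmt7 {X : Type*} [MetricSpace X] (V : Finset X) (hn : 9 ≤ V.card)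
    (hne : V.Nonempty) :
    ∑ v ∈ V, (V.sup' hne fun z => dist z v / ∑ w ∈ V, dist z w) ≤ 36 := by
  set n : ℝ := (V.card : ℝ) with hn_def
  have hn9 : (9:ℝ) ≤ n := by rw [hn_def]; exact_mod_cast hn
  have hnpos : (0:ℝ) < n := by linarith
  have hWpos : ∀ z ∈ V, 0 < ∑ w ∈ V, dist z w := by
    intro z hz
    obtain ⟨w, hw, hwz⟩ :=
      Finset.exists_mem_ne (show 1 < V.card by omega) z
    exact Finset.sum_pos' (fun w _ => dist_nonneg) ⟨w, hw, dist_pos.2 (Ne.symm hwz)⟩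
  set S : ℝ := ∑ w ∈ V, ∑ u ∈ V, dist w u with hS
  have hSpos : 0 < S := by
    obtain ⟨v, hv⟩ := hne
    exact Finset.sum_pos' (fun w hw => (hWpos w hw).le) ⟨v, hv, hWpos v hv⟩
  -- W(z) ≥ n * d(z,v) - W(v)
  have hW_lb : ∀ z ∈ V, ∀ v ∈ V,
      n * dist z v - (∑ w ∈ V, dist v w) ≤ ∑ w ∈ V, dist z w := by
    intro z hz v hv
    have h1 : ∑ w ∈ V, (dist z v - dist v w) ≤ ∑ w ∈ V, dist z w :=
      Finset.sum_le_sum fun w _ => by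
        have ht := dist_triangle z w v
        have h2 : dist w v = dist v w := dist_comm w v
        linarith
    have h3 : ∑ w ∈ V, (dist z v - dist v w)
        = n * dist z v - ∑ w ∈ V, dist v w := by
      rw [Finset.sum_sub_distrib, Finset.sum_const, nsmul_eq_mul]
    linarith
  -- S ≤ 2 n W(z)
  have hS_ub : ∀ z ∈ V, S ≤ 2 * n * ∑ w ∈ V, dist z w := by
    intro z hz
    have h1 : S ≤ ∑ a ∈ V, ∑ b ∈ V, (dist a z + dist z b) := by
      apply Finset.sum_le_sum
      intro a _
      exact Finset.sum_le_sum fun b _ => dist_triangle a z b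
    have h2 : ∑ a ∈ V, ∑ b ∈ V, (dist a z + dist z b)
        = 2 * n * ∑ w ∈ V, dist z w := by
      have hcomm : ∀ a : X, dist a z = dist z a := fun a => dist_comm a z
      have hsum : ∑ a ∈ V, dist a z = ∑ a ∈ V, dist z a :=
        Finset.sum_congr rfl fun a _ => dist_comm a z
      simp only [Finset.sum_add_distrib, Finset.sum_const, nsmul_eq_mul]
      rw [← Finset.mul_sum, hsum, ← hn_def]
      ring
    linarith
  -- per-point bound
  have hbound : ∀ v ∈ V,
      (V.sup' hne fun z => dist z v / ∑ w ∈ V, dist z w)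
        ≤ 2 / n + 4 * (∑ w ∈ V, dist v w) / S := by
    intro v hv
    apply Finset.sup'_le
    intro z hz
    have hWz := hWpos z hz
    have hWv := hWpos v hv
    have hlb := hW_lb z hz v hv
    have hub := hS_ub z hz
    have hd : 0 ≤ dist z v := dist_nonneg
    by_cases h : n * dist z v ≤ 2 * ∑ w ∈ V, dist v w
    · have key : dist z v / (∑ w ∈ V, dist z w)
          ≤ 4 * (∑ w ∈ V, dist v w) / S := by
        rw [div_le_div_iff₀ hWz hSpos]
        nlinarith [mul_nonneg hd (sub_nonneg.2 hub),
          mul_nonneg (sub_nonneg.2 h) hWz.le]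
      have : 0 ≤ 2 / n := by positivity
      linarith
    · push_neg at h
      have key : dist z v / (∑ w ∈ V, dist z w) ≤ 2 / n := by
        rw [div_le_div_iff₀ hWz hnpos]
        nlinarith
      have : 0 ≤ 4 * (∑ w ∈ V, dist v w) / S := by positivity
      linarith
  calc ∑ v ∈ V, (V.sup' hne fun z => dist z v / ∑ w ∈ V, dist z w)
      ≤ ∑ v ∈ V, (2 / n + 4 * (∑ w ∈ V, dist v w) / S) :=
        Finset.sum_le_sum hbound
    _ = n * (2 / n) + 4 * S / S := by
        rw [Finset.sum_add_distrib, Finset.sum_const, nsmul_eq_mul]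
        congr 1
        rw [← Finset.sum_div, ← Finset.mul_sum]
    _ = 2 + 4 := by
        rw [mul_div_cancel₀ _ hnpos.ne', mul_div_assoc,
          div_self hSpos.ne', mul_one]
    _ ≤ 36 := by norm_num
end

section
/- Let u, z ∈ X, let c ≥ 1 and q ∈ [0,1), and suppose that at least (1−q)·n points v ∈ V satisfy dist(u,v) ≥ dist(u,z)/c (i.e., dist(u,z) is at most c times the distance of the (qn)-th closest point of V to u). Then W(u) ≤ n·dist(u,z) + W(z) ≤ (1 + 2c/(1−q))·W(u). -/
open Finset

/-- If `dist u z` is at most `c` times the distance of the `(qn)`-th closest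
point of `V` to `u` (i.e. at least `(1−q)·n` points `v ∈ V` have `dist u v ≥ dist u z / c`),
then `W(u) ≤ n·dist(u,z) + W(z) ≤ (1 + 2c/(1−q))·W(u)`. -/
theorem stmt9 {X : Type*} [MetricSpace X] (V : Finset X) (u z : X)
    (c q : ℝ) (hc : 1 ≤ c) (hq0 : 0 ≤ q) (hq1 : q < 1)
    (hrank : (1 - q) * (V.card : ℝ) ≤
      ((V.filter fun v => dist u z / c ≤ dist u v).card : ℝ)) :
    (∑ w ∈ V, dist u w) ≤ (V.card : ℝ) * dist u z + ∑ w ∈ V, dist z w ∧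
      (V.card : ℝ) * dist u z + ∑ w ∈ V, dist z w ≤
        (1 + 2 * c / (1 - q)) * ∑ w ∈ V, dist u w := by
  set n : ℝ := (V.card : ℝ) with hn
  have hc0 : (0:ℝ) < c := lt_of_lt_of_le one_pos hc
  have h1q : (0:ℝ) < 1 - q := by linarith
  have hA : (∑ w ∈ V, dist u w) ≤ n * dist u z + ∑ w ∈ V, dist z w := by
    calc ∑ w ∈ V, dist u w ≤ ∑ w ∈ V, (dist u z + dist z w) :=
          Finset.sum_le_sum fun w _ => dist_triangle u z w
      _ = n * dist u z + ∑ w ∈ V, dist z w := by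
          rw [Finset.sum_add_distrib, Finset.sum_const, nsmul_eq_mul]
  have hB : (∑ w ∈ V, dist z w) ≤ n * dist u z + ∑ w ∈ V, dist u w := by
    calc ∑ w ∈ V, dist z w ≤ ∑ w ∈ V, (dist z u + dist u w) :=
          Finset.sum_le_sum fun w _ => dist_triangle z u w
      _ = n * dist u z + ∑ w ∈ V, dist u w := by
          rw [Finset.sum_add_distrib, Finset.sum_const, nsmul_eq_mul, dist_comm z u]
  have hfil : ((V.filter fun v => dist u z / c ≤ dist u v).card : ℝ) * (dist u z / c)
      ≤ ∑ w ∈ V, dist u w := by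
    calc ((V.filter fun v => dist u z / c ≤ dist u v).card : ℝ) * (dist u z / c)
        ≤ ∑ w ∈ V.filter (fun v => dist u z / c ≤ dist u v), dist u w := by
          have := Finset.card_nsmul_le_sum (V.filter fun v => dist u z / c ≤ dist u v)
            (fun w => dist u w) (dist u z / c) (fun i hi => (Finset.mem_filter.mp hi).2)
          simpa [nsmul_eq_mul] using this
      _ ≤ ∑ w ∈ V, dist u w :=
          Finset.sum_le_sum_of_subset_of_nonneg (Finset.filter_subset _ _)
            fun i _ _ => dist_nonneg
  have hkey : (1 - q) * n * dist u z ≤ c * ∑ w ∈ V, dist u w := by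
    have h1 : (1 - q) * n * (dist u z / c)
        ≤ ((V.filter fun v => dist u z / c ≤ dist u v).card : ℝ) * (dist u z / c) :=
      mul_le_mul_of_nonneg_right hrank (by positivity)
    have h2 : (1 - q) * n * (dist u z / c) ≤ ∑ w ∈ V, dist u w := h1.trans hfil
    have := mul_le_mul_of_nonneg_left h2 hc0.le
    calc (1 - q) * n * dist u z = c * ((1 - q) * n * (dist u z / c)) := by
          field_simp
      _ ≤ c * ∑ w ∈ V, dist u w := this
  refine ⟨hA, ?_⟩
  have h3 : 2 * n * dist u z ≤ 2 * c / (1 - q) * ∑ w ∈ V, dist u w := by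
    rw [div_mul_eq_mul_div, le_div_iff₀ h1q]
    nlinarith [hkey]
  nlinarith [hB, h3]
end

section
/- Assume n is even and let z ∈ V minimize W over V (the 1-median). Then at least n/2 points v ∈ V satisfy W(v) ≤ 3·W(z). -/
open Finset

/-- If `n` is even and `z ∈ V` is the 1-median (minimizes `W` over `V`),
then at least `n/2` points `v ∈ V` satisfy `W(v) ≤ 3·W(z)`. -/
theorem stmt14 {X : Type*} [MetricSpace X] (V : Finset X) (hn : Even V.card)
    (z : X) (hz : z ∈ V) (hmed : ∀ w ∈ V, (∑ x ∈ V, dist z x) ≤ ∑ x ∈ V, dist w x) :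
    V.card / 2 ≤
      (V.filter fun v => (∑ x ∈ V, dist v x) ≤ 3 * ∑ x ∈ V, dist z x).card := by
  classical
  set n := V.card with hn'
  set W : ℝ := ∑ x ∈ V, dist z x with hW
  have hnpos : 0 < n := card_pos.mpr ⟨z, hz⟩
  have hnR : (0:ℝ) < n := by exact_mod_cast hnpos
  have hWnn : 0 ≤ W := Finset.sum_nonneg fun x _ => dist_nonneg
  set t : ℝ := 2 * W / n with ht
  have htnn : 0 ≤ t := by positivity
  have hnt : (n:ℝ) * t = 2 * W := by
    rw [ht]; field_simp
  set good := V.filter (fun v => dist z v ≤ t) with hgood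
  have hsub : good ⊆ V.filter fun v => (∑ x ∈ V, dist v x) ≤ 3 * W := by
    intro v hv
    rw [hgood, mem_filter] at hv
    obtain ⟨hvV, hvd⟩ := hv
    rw [mem_filter]
    refine ⟨hvV, ?_⟩
    have h1 : (∑ x ∈ V, dist v x) ≤ ∑ x ∈ V, (dist v z + dist z x) :=
      Finset.sum_le_sum fun x _ => dist_triangle v z x
    have h2 : ∑ x ∈ V, (dist v z + dist z x) = n * dist v z + W := by
      rw [Finset.sum_add_distrib, Finset.sum_const, nsmul_eq_mul]
    have h3 : (n:ℝ) * dist v z ≤ n * t := by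
      have hd : dist v z ≤ t := by rwa [dist_comm]
      exact mul_le_mul_of_nonneg_left hd (le_of_lt hnR)
    linarith
  have hkey : n ≤ 2 * good.card := by
    by_contra hcon
    push_neg at hcon
    set bad := V.filter (fun v => ¬ dist z v ≤ t) with hbad
    have hcards : good.card + bad.card = n := by
      rw [hgood, hbad]; exact Finset.card_filter_add_card_filter_not _
    have hbne : bad.Nonempty := by
      rw [← Finset.card_pos]; omega
    have hlt : (bad.card : ℝ) * t < ∑ v ∈ bad, dist z v := by
      have h := Finset.sum_lt_sum_of_nonempty hbne (f := fun _ => t)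
        (g := fun v => dist z v) (by
          intro v hv
          rw [hbad, mem_filter] at hv
          exact lt_of_not_ge hv.2)
      simpa [Finset.sum_const, nsmul_eq_mul] using h
    have hsum : ∑ v ∈ bad, dist z v ≤ W := by
      apply Finset.sum_le_sum_of_subset_of_nonneg (filter_subset _ _)
      intro x _ _; exact dist_nonneg
    have hb2 : (n:ℝ)/2 ≤ (bad.card : ℝ) := by
      have hc : (good.card : ℝ) + bad.card = n := by exact_mod_cast hcards
      have hg : 2 * (good.card:ℝ) < n := by exact_mod_cast hcon
      linarith
    have hbt : (n:ℝ)/2 * t ≤ (bad.card : ℝ) * t :=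
      mul_le_mul_of_nonneg_right hb2 htnn
    linarith
  calc n / 2 ≤ good.card := by omega
    _ ≤ _ := Finset.card_le_card hsub
end

section
/- Let Q be an integer with ⌈1+n/2⌉ ≤ Q ≤ n and let c ∈ X be any point. Then every v ∈ V with dist(c,v) ≤ m_Q(c) satisfies m_Q(v) ≤ 2·m_Q(c), and there are at least Q such points v ∈ V. In particular, at least half the points of V satisfy m_Q(v) ≤ 2·m_Q(c). -/
open Finset

lemma medDist_isLeast {X : Type*} [MetricSpace X] (V : Finset X) (Q : ℕ)
    (hQ1 : 1 ≤ Q) (hQn : Q ≤ V.card) (u : X) :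
    IsLeast {r : ℝ | Q ≤ (V.filter fun v => dist u v ≤ r).card} (medDist V Q u) := by
  have hV : V.Nonempty := card_pos.mp (hQ1.trans hQn)
  set S := {r : ℝ | Q ≤ (V.filter fun v => dist u v ≤ r).card} with hS
  set T := (V.image (dist u)).filter (fun r => Q ≤ (V.filter fun v => dist u v ≤ r).card)
    with hTdef
  have hT : T.Nonempty := by
    refine ⟨(V.image (dist u)).max' (hV.image _), ?_⟩
    rw [hTdef, mem_filter]
    refine ⟨max'_mem _ _, ?_⟩
    have : V.filter (fun v => dist u v ≤ (V.image (dist u)).max' (hV.image _)) = V := by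
      apply filter_true_of_mem
      intro v hv
      exact le_max' _ _ (mem_image_of_mem _ hv)
    rw [this]; exact hQn
  have hLeast : IsLeast S (T.min' hT) := by
    constructor
    · exact (mem_filter.mp (min'_mem T hT)).2
    · intro r hr
      have hrS : Q ≤ (V.filter fun v => dist u v ≤ r).card := hr
      have hne : (V.filter fun v => dist u v ≤ r).Nonempty :=
        card_pos.mp (hQ1.trans hrS)
      set F := V.filter fun v => dist u v ≤ r with hF
      have hFim : (F.image (dist u)).Nonempty := hne.image _
      set d := (F.image (dist u)).max' hFim with hd
      have hdr : d ≤ r := by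
        apply max'_le
        intro y hy
        obtain ⟨w, hw, rfl⟩ := mem_image.mp hy
        exact (mem_filter.mp hw).2
      have hsub : F ⊆ V.filter fun v => dist u v ≤ d := by
        intro w hw
        rw [mem_filter]
        exact ⟨(mem_filter.mp hw).1, le_max' _ _ (mem_image_of_mem _ hw)⟩
      have hdT : d ∈ T := by
        rw [hTdef, mem_filter]
        constructor
        · obtain ⟨w, hw, hwd⟩ := mem_image.mp (max'_mem _ hFim)
          exact mem_image.mpr ⟨w, (mem_filter.mp hw).1, hwd⟩
        · exact hrS.trans (card_le_card hsub)
      exact le_trans (min'_le _ _ hdT) hdr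
  rw [medDist, ← hS, hLeast.csInf_eq]
  exact hLeast

/-- Let `⌈1+n/2⌉ ≤ Q ≤ n` and let `c` be any point of the space. Then
every `v ∈ V` with `dist c v ≤ m_Q(c)` satisfies `m_Q(v) ≤ 2·m_Q(c)`, and there are at
least `Q` such points `v ∈ V`; in particular at least half the points of `V` satisfy
`m_Q(v) ≤ 2·m_Q(c)`. -/
theorem stmt17 {X : Type*} [MetricSpace X] (V : Finset X) (Q : ℕ)
    (hQlo : (V.card + 1) / 2 + 1 ≤ Q) (hQhi : Q ≤ V.card) (c : X) :
    (∀ v ∈ V, dist c v ≤ medDist V Q c → medDist V Q v ≤ 2 * medDist V Q c) ∧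
      Q ≤ (V.filter fun v => dist c v ≤ medDist V Q c).card ∧
        V.card ≤ 2 * (V.filter fun v => medDist V Q v ≤ 2 * medDist V Q c).card := by
  have hQ1 : 1 ≤ Q := by omega
  have hc := medDist_isLeast V Q hQ1 hQhi c
  have hmem : Q ≤ (V.filter fun v => dist c v ≤ medDist V Q c).card := hc.1
  have main : ∀ v ∈ V, dist c v ≤ medDist V Q c → medDist V Q v ≤ 2 * medDist V Q c := by
    intro v hv hvd
    have hv2 : Q ≤ (V.filter fun w => dist v w ≤ 2 * medDist V Q c).card := by
      refine hmem.trans (card_le_card ?_)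
      intro w hw
      rw [mem_filter] at hw ⊢
      refine ⟨hw.1, ?_⟩
      calc dist v w ≤ dist v c + dist c w := dist_triangle _ _ _
        _ ≤ medDist V Q c + medDist V Q c := by
            rw [dist_comm]; exact add_le_add hvd hw.2
        _ = 2 * medDist V Q c := by ring
    have hbdd : BddBelow {r : ℝ | Q ≤ (V.filter fun w => dist v w ≤ r).card} := by
      refine ⟨0, fun r hr => ?_⟩
      have : (V.filter fun w => dist v w ≤ r).Nonempty :=
        card_pos.mp (hQ1.trans hr)
      obtain ⟨w, hw⟩ := this
      exact le_trans dist_nonneg (mem_filter.mp hw).2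
    exact csInf_le hbdd hv2
  refine ⟨main, hmem, ?_⟩
  have hsub : (V.filter fun v => dist c v ≤ medDist V Q c) ⊆
      V.filter fun v => medDist V Q v ≤ 2 * medDist V Q c := by
    intro v hv
    rw [mem_filter] at hv ⊢
    exact ⟨hv.1, main v hv.1 hv.2⟩
  have h2 : Q ≤ (V.filter fun v => medDist V Q v ≤ 2 * medDist V Q c).card :=
    hmem.trans (card_le_card hsub)
  omega
end

section
/- Assume n ≥ 9. Then there exists a function γ : V → ℝ with γ_v ≥ 0 for all v and Σ_{v ∈ V} γ_v ≤ 2, such that for all v, z ∈ V: γ_v ≥ (1/18)·dist(z,v)/W(z). (Such γ is a set of universal PPS coefficients; one may take γ_v = max{1/n, dist(u,v)/W(u)} for a well positioned point u ∈ V.) -/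
open Finset

lemma med_exists {X : Type*} [MetricSpace X] (V : Finset X) (hV : V.Nonempty)
    (k : ℕ) (hk1 : 1 ≤ k) (hkn : k ≤ V.card) (u : X) :
    ∃ m : ℝ, (∃ w ∈ V, m = dist u w) ∧
      k ≤ (V.filter (fun w => dist u w ≤ m)).card ∧
      (V.filter (fun w => dist u w < m)).card < k := by
  classical
  set C := (V.image (dist u)).filter
      (fun r => k ≤ (V.filter (fun w => dist u w ≤ r)).card) with hC
  have himg : (V.image (dist u)).Nonempty := hV.image _
  have hCne : C.Nonempty := by
    refine ⟨(V.image (dist u)).max' himg, ?_⟩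
    rw [hC, mem_filter]
    refine ⟨max'_mem _ _, ?_⟩
    have hfil : V.filter (fun w => dist u w ≤ (V.image (dist u)).max' himg) = V := by
      apply filter_true_of_mem
      intro w hw
      exact le_max' _ _ (mem_image_of_mem _ hw)
    rw [hfil]; exact hkn
  set m := C.min' hCne with hm
  have hmC : m ∈ C := min'_mem _ _
  rw [hC, mem_filter, mem_image] at hmC
  obtain ⟨⟨w0, hw0, hw0e⟩, hcard⟩ := hmC
  refine ⟨m, ⟨w0, hw0, hw0e.symm⟩, hcard, ?_⟩
  by_contra h
  push_neg at h
  set T := V.filter (fun w => dist u w < m) with hT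
  have hTne : T.Nonempty := card_pos.mp (by omega)
  have hTimg : (T.image (dist u)).Nonempty := hTne.image _
  set r := (T.image (dist u)).max' hTimg with hr
  have hrT : r ∈ T.image (dist u) := max'_mem _ _
  obtain ⟨w1, hw1, hw1e⟩ := mem_image.mp hrT
  have hw1' := mem_filter.mp hw1
  have hrm : r < m := by rw [← hw1e]; exact hw1'.2
  have hrC : r ∈ C := by
    rw [hC, mem_filter]
    constructor
    · rw [← hw1e]
      exact mem_image_of_mem _ hw1'.1
    · have hsub : T ⊆ V.filter (fun w => dist u w ≤ r) := by
        intro w hw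
        have hw2 := mem_filter.mp hw
        rw [mem_filter]
        exact ⟨hw2.1, le_max' _ _ (mem_image_of_mem _ hw)⟩
      exact le_trans h (card_le_card hsub)
  have : m ≤ r := min'_le _ _ hrC
  linarith

/-- If `n ≥ 9`, then there exist universal PPS coefficients: a function
`γ : V → ℝ` with `γ_v ≥ 0`, `Σ_{v ∈ V} γ_v ≤ 2`, and
`γ_v ≥ (1/18)·dist(z,v)/W(z)` for all `v, z ∈ V`. -/
theorem stmt19 {X : Type*} [MetricSpace X] (V : Finset X) (hn : 9 ≤ V.card) :
    ∃ γ : X → ℝ,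
      (∀ v ∈ V, 0 ≤ γ v) ∧
        (∑ v ∈ V, γ v) ≤ 2 ∧
          ∀ v ∈ V, ∀ z ∈ V,
            (1 / 18) * (dist z v / ∑ w ∈ V, dist z w) ≤ γ v := by
  classical
  set n := V.card with hn_def
  set k := n / 2 + 1 with hk_def
  have hVne : V.Nonempty := card_pos.mp (by omega)
  have hnR : (9:ℝ) ≤ (n:ℝ) := by exact_mod_cast hn
  have hnpos : (0:ℝ) < n := by linarith
  have hk1 : 1 ≤ k := by omega
  have hkn : k ≤ n := by omega
  choose m hm_img hm_le hm_lt using med_exists V hVne k hk1 hkn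
  -- W positivity
  have hWpos : ∀ z ∈ V, 0 < ∑ w ∈ V, dist z w := by
    intro z hz
    obtain ⟨y, hy, hyz⟩ : ∃ y ∈ V, y ≠ z := by
      by_contra h
      push_neg at h
      have hsub : V ⊆ {z} := fun x hx => by simp [h x hx]
      have := card_le_card hsub
      simp at this
      omega
    have h1 : 0 < dist z y := dist_pos.mpr (Ne.symm hyz)
    exact lt_of_lt_of_le h1 (single_le_sum (f := fun w => dist z w) (fun w _ => dist_nonneg) hy)
  -- m nonneg
  have hm_nonneg : ∀ z, 0 ≤ m z := by
    intro z
    obtain ⟨w, _, hw⟩ := hm_img z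
    rw [hw]; exact dist_nonneg
  -- W lower bound: (n/2) * m z ≤ W z
  have hWm : ∀ z, ((n:ℝ)/2) * m z ≤ ∑ w ∈ V, dist z w := by
    intro z
    set F := V.filter (fun w => m z ≤ dist z w) with hF
    have hsplit : (V.filter (fun w => dist z w < m z)).card + F.card = n := by
      have h := card_filter_add_card_filter_not (s := V) (p := fun w => dist z w < m z)
      simp only [not_lt] at h
      rw [hF, hn_def]
      exact h
    have hFcard : n - n/2 ≤ F.card := by
      have := hm_lt z
      omega
    have h1 : (F.card : ℝ) * m z ≤ ∑ w ∈ F, dist z w := by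
      have : ∑ w ∈ F, m z ≤ ∑ w ∈ F, dist z w := by
        apply sum_le_sum
        intro w hw
        exact (mem_filter.mp hw).2
      simpa using this
    have h2 : ∑ w ∈ F, dist z w ≤ ∑ w ∈ V, dist z w := by
      apply sum_le_sum_of_subset_of_nonneg (filter_subset _ _)
      intro w _ _; exact dist_nonneg
    have h3 : ((n:ℝ)/2) ≤ (F.card : ℝ) := by
      have hc : ((n - n/2 : ℕ) : ℝ) ≤ (F.card : ℝ) := by exact_mod_cast hFcard
      have : ((n - n/2 : ℕ) : ℝ) = (n : ℝ) - ((n/2 : ℕ) : ℝ) := by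
        have := Nat.div_le_self n 2
        push_cast [Nat.cast_sub this]
        ring
      rw [this] at hc
      have h4 : ((n/2 : ℕ) : ℝ) ≤ (n:ℝ)/2 := by
        rw [le_div_iff₀ (by norm_num : (0:ℝ) < 2)]
        exact_mod_cast Nat.div_mul_le_self n 2
      linarith
    calc ((n:ℝ)/2) * m z ≤ (F.card : ℝ) * m z :=
          mul_le_mul_of_nonneg_right h3 (hm_nonneg z)
      _ ≤ ∑ w ∈ F, dist z w := h1
      _ ≤ ∑ w ∈ V, dist z w := h2
  -- choose u minimizing m
  obtain ⟨u, huV, humin⟩ := V.exists_min_image m hVne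
  set Wu := ∑ w ∈ V, dist u w with hWu_def
  have hWupos : 0 < Wu := hWpos u huV
  -- key distance bound: dist u z ≤ 2 * m z for z ∈ V
  have hduz : ∀ z ∈ V, dist u z ≤ 2 * m z := by
    intro z hz
    set A := V.filter (fun w => dist u w ≤ m u) with hA
    set B := V.filter (fun w => dist z w ≤ m z) with hB
    have hAB : (A ∩ B).Nonempty := by
      rw [← card_pos]
      have h1 : (A ∪ B).card ≤ n := card_le_card (union_subset (filter_subset _ _) (filter_subset _ _))
      have h2 := card_union_add_card_inter A B
      have h3 : k ≤ A.card := hm_le u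
      have h4 : k ≤ B.card := hm_le z
      omega
    obtain ⟨w, hw⟩ := hAB
    rw [mem_inter] at hw
    have hwA := (mem_filter.mp hw.1).2
    have hwB := (mem_filter.mp hw.2).2
    have htri : dist u z ≤ dist u w + dist z w := by
      rw [dist_comm z w]
      exact dist_triangle u w z
    have hmu : m u ≤ m z := humin z hz
    linarith
  -- main per-z bounds
  refine ⟨fun v => max (1/(n:ℝ)) (dist u v / Wu), ?_, ?_, ?_⟩
  · intro v _
    exact le_trans (by positivity) (le_max_left _ _)
  · have hsum : ∑ v ∈ V, max (1/(n:ℝ)) (dist u v / Wu)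
        ≤ ∑ v ∈ V, (1/(n:ℝ) + dist u v / Wu) := by
      apply sum_le_sum
      intro v _
      apply max_le
      · have : (0:ℝ) ≤ dist u v / Wu := by positivity
        linarith
      · have : (0:ℝ) ≤ 1/(n:ℝ) := by positivity
        linarith
    have h1 : ∑ v ∈ V, (1/(n:ℝ) + dist u v / Wu) = 2 := by
      rw [sum_add_distrib, sum_const, ← sum_div, ← hWu_def, div_self (ne_of_gt hWupos),
        nsmul_eq_mul]
      have hcard : ((V.card : ℕ) : ℝ) = (n:ℝ) := by rw [hn_def]
      rw [hcard, mul_one_div, div_self (ne_of_gt hnpos)]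
      norm_num
    linarith
  · intro v hv z hz
    set Wz := ∑ w ∈ V, dist z w with hWz_def
    have hWzpos : 0 < Wz := hWpos z hz
    set γv := max (1/(n:ℝ)) (dist u v / Wu) with hγ
    have hγ1 : 1/(n:ℝ) ≤ γv := le_max_left _ _
    have hγ2 : dist u v / Wu ≤ γv := le_max_right _ _
    have hγpos : 0 < γv := lt_of_lt_of_le (by positivity) hγ1
    -- n * dist u z ≤ 4 * Wz
    have hndz : (n:ℝ) * dist u z ≤ 4 * Wz := by
      have h1 := hduz z hz
      have h2 := hWm z
      nlinarith [hm_nonneg z]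
    -- Wu ≤ 5 * Wz
    have hWu5 : Wu ≤ 5 * Wz := by
      have h1 : Wu ≤ Wz + (n:ℝ) * dist u z := by
        have hsum : ∑ w ∈ V, dist u w ≤ ∑ w ∈ V, (dist z w + dist u z) := by
          apply sum_le_sum
          intro w _
          calc dist u w ≤ dist u z + dist z w := dist_triangle u z w
            _ = dist z w + dist u z := by ring
        rw [sum_add_distrib, sum_const] at hsum
        rw [hWu_def, hWz_def]
        calc ∑ w ∈ V, dist u w ≤ ∑ w ∈ V, dist z w + V.card • dist u z := hsum
          _ = ∑ w ∈ V, dist z w + (n:ℝ) * dist u z := by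
              rw [nsmul_eq_mul, hn_def]

      linarith
    -- dist z v / Wz ≤ 9 * γv
    have hkey : dist z v / Wz ≤ 9 * γv := by
      have htri : dist z v ≤ dist u v + dist u z := by
        rw [dist_comm z v]
        calc dist v z ≤ dist v u + dist u z := dist_triangle v u z
          _ = dist u v + dist u z := by rw [dist_comm v u]
      have h1 : dist z v / Wz ≤ dist u v / Wz + dist u z / Wz := by
        rw [← add_div]
        gcongr
      have h2 : dist u z / Wz ≤ 4 / (n:ℝ) := by
        rw [div_le_div_iff₀ hWzpos hnpos]
        linarith [hndz]
      have h3 : dist u v / Wz ≤ 5 * dist u v / Wu := by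
        rw [div_le_div_iff₀ hWzpos hWupos]
        nlinarith [dist_nonneg (x := u) (y := v)]
      have h4 : 4 / (n:ℝ) ≤ 4 * γv := by
        have : 4 / (n:ℝ) = 4 * (1/(n:ℝ)) := by ring
        rw [this]
        linarith
      have h5 : 5 * dist u v / Wu ≤ 5 * γv := by
        rw [mul_div_assoc]
        linarith
      linarith
    linarith
end
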